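/- arXiv:2508.01190 — 2 statements merged into one kernel-verified Lean document; each statement's English description precedes it below -/
import Mathlib

section
/- Let n = 2m with m a positive integer and let γ be a nonzero element of F_{2^n}. Then Σ_{x ∈ μ_{2^m+1}} (−1)^{Tr(γx)} = 1 − K_m(γ·γ̄), where γ·γ̄ = γ^{2^m+1} is regarded as an element of the subfield F_{2^m}. -/
open scoped BigOperators Classical

noncomputable instance (p n : ℕ) [Fact p.Prime] : Fintype (GaloisField p n) :=
  Fintype.ofFinite _

/-- The absolute trace map from `F_{2^n}` to `F_2`. -/
noncomputable def trF2 (n : ℕ) (x : GaloisField 2 n) : ZMod 2 :=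
  Algebra.trace (ZMod 2) (GaloisField 2 n) x

/-- The binary Kloosterman sum `K_m(γ) = Σ_x (-1)^{Tr(γx + x⁻¹)}` (with `0⁻¹ = 0`). -/
noncomputable def kloo (m : ℕ) (γ : GaloisField 2 m) : ℤ :=
  ∑ x : GaloisField 2 m, (-1 : ℤ) ^ (trF2 m (γ * x + x⁻¹)).val

/-- The DLCT entry of `F : F_{2^n} → F_{2^n}` at `(u,v)`. -/
noncomputable def dlct (n : ℕ) (F : GaloisField 2 n → GaloisField 2 n)
    (u v : GaloisField 2 n) : ℤ :=
  (Nat.card {x : GaloisField 2 n // trF2 n (v * (F (x + u) + F x)) = 0} : ℤ) - 2 ^ (n - 1)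

/-- The differential-linear uniformity of `F`: the max of `|DLCT_F(u,v)|` over nonzero `u, v`. -/
noncomputable def dlu (n : ℕ) (F : GaloisField 2 n → GaloisField 2 n) : ℕ :=
  Finset.sup
    (Finset.univ.filter fun p : GaloisField 2 n × GaloisField 2 n => p.1 ≠ 0 ∧ p.2 ≠ 0)
    (fun p => (dlct n F p.1 p.2).natAbs)

namespace Stmt14Aux

open Finset

lemma gf_card (n : ℕ) (hn : n ≠ 0) : Fintype.card (GaloisField 2 n) = 2 ^ n := by
  rw [← Nat.card_eq_fintype_card]
  exact GaloisField.card 2 n hn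

lemma gf_pow_card {n : ℕ} (hn : n ≠ 0) (x : GaloisField 2 n) : x ^ 2 ^ n = x := by
  have h := FiniteField.pow_card x
  rwa [gf_card n hn] at h

lemma gf_two_eq_zero {n : ℕ} (x : GaloisField 2 n) : x + x = 0 := by
  have h2 : (2 : GaloisField 2 n) = 0 := by
    exact_mod_cast CharP.cast_eq_zero (GaloisField 2 n) 2
  calc x + x = 2 * x := by ring
  _ = 0 := by rw [h2, zero_mul]

lemma gf_add_eq_zero_iff {n : ℕ} {x y : GaloisField 2 n} : x + y = 0 ↔ x = y := by
  constructor
  · intro h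
    calc x = x + (y + y) := by rw [gf_two_eq_zero, add_zero]
    _ = (x + y) + y := by ring
    _ = y := by rw [h, zero_add]
  · intro h; rw [h]; exact gf_two_eq_zero y

lemma gf_sq_add {n : ℕ} (x y : GaloisField 2 n) : (x + y) ^ 2 = x ^ 2 + y ^ 2 :=
  add_pow_char x y 2

lemma gf_pow_add {n k : ℕ} (x y : GaloisField 2 n) :
    (x + y) ^ 2 ^ k = x ^ 2 ^ k + y ^ 2 ^ k :=
  add_pow_char_pow x y 2 k

lemma gf_sq_inj {n : ℕ} {x y : GaloisField 2 n} (h : x ^ 2 = y ^ 2) : x = y := by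
  have h0 : (x + y) ^ 2 = 0 := by
    rw [gf_sq_add, h]; exact gf_add_eq_zero_iff.mpr rfl
  exact gf_add_eq_zero_iff.mp (pow_eq_zero_iff (two_ne_zero) |>.mp h0)

lemma gf_sq_surj {n : ℕ} (y : GaloisField 2 n) : ∃ x, x ^ 2 = y := by
  have hinj : Function.Injective (fun x : GaloisField 2 n => x ^ 2) :=
    fun a b h => gf_sq_inj h
  exact Finite.surjective_of_injective hinj y

lemma trF2_add {n : ℕ} (x y : GaloisField 2 n) :
    trF2 n (x + y) = trF2 n x + trF2 n y :=
  map_add (Algebra.trace (ZMod 2) (GaloisField 2 n)) x y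

lemma trF2_sq (n : ℕ) (x : GaloisField 2 n) : trF2 n (x ^ 2) = trF2 n x := by
  have hinj : Function.Injective (algebraMap (ZMod 2) (GaloisField 2 n)) :=
    (algebraMap (ZMod 2) (GaloisField 2 n)).injective
  apply hinj
  have h1 := trace_eq_sum_automorphisms (K := ZMod 2) (x ^ 2)
  have h2 := trace_eq_sum_automorphisms (K := ZMod 2) (x : GaloisField 2 n)
  rw [trF2, trF2, h1]
  calc ∑ σ : GaloisField 2 n ≃ₐ[ZMod 2] GaloisField 2 n, σ (x ^ 2)
      = (∑ σ : GaloisField 2 n ≃ₐ[ZMod 2] GaloisField 2 n, σ x) ^ 2 := by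
        rw [sum_pow_char]
        exact Finset.sum_congr rfl fun σ _ => map_pow σ x 2
    _ = (algebraMap (ZMod 2) (GaloisField 2 n) (Algebra.trace (ZMod 2) _ x)) ^ 2 := by rw [h2]
    _ = algebraMap (ZMod 2) (GaloisField 2 n) ((Algebra.trace (ZMod 2) _ x) ^ 2) := by
        rw [map_pow]
    _ = algebraMap (ZMod 2) (GaloisField 2 n) (Algebra.trace (ZMod 2) _ x) := by
        congr 1
        exact ZMod.pow_card _

lemma trace_exists_one (n : ℕ) :
    ∃ y : GaloisField 2 n, trF2 n y = 1 := by
  by_contra h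
  push_neg at h
  have h0 : ∀ y : GaloisField 2 n, trF2 n y = 0 := by
    intro y
    have := h y
    revert this
    generalize trF2 n y = t
    revert t; decide
  have := (traceForm_nondegenerate (ZMod 2) (GaloisField 2 n)).1 1 (fun y => by
    rw [Algebra.traceForm_apply, one_mul]; exact h0 y)
  exact one_ne_zero this

lemma sum_char_eq_zero {n : ℕ} {a : GaloisField 2 n} (ha : a ≠ 0) :
    ∑ x : GaloisField 2 n, (-1 : ℤ) ^ (trF2 n (a * x)).val = 0 := by
  obtain ⟨y, hy⟩ := trace_exists_one n
  set y₀ := a⁻¹ * y with hy₀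
  have hkey : ∀ x : GaloisField 2 n, trF2 n (a * (x + y₀)) = trF2 n (a * x) + 1 := by
    intro x
    rw [mul_add, trF2_add]
    congr 1
    rw [hy₀, ← mul_assoc, mul_inv_cancel₀ ha, one_mul]
    exact hy
  have hS : (∑ x : GaloisField 2 n, (-1 : ℤ) ^ (trF2 n (a * x)).val)
      = - ∑ x : GaloisField 2 n, (-1 : ℤ) ^ (trF2 n (a * x)).val := by
    conv_lhs => rw [← Equiv.sum_comp (Equiv.addRight y₀)
      (fun x => (-1 : ℤ) ^ (trF2 n (a * x)).val)]
    rw [← Finset.sum_neg_distrib]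
    apply Finset.sum_congr rfl
    intro x _
    show (-1 : ℤ) ^ (trF2 n (a * (x + y₀))).val = -(-1 : ℤ) ^ (trF2 n (a * x)).val
    rw [hkey x]
    generalize trF2 n (a * x) = t
    revert t; decide
  omega

lemma exists_AS {n : ℕ} {β : GaloisField 2 n} (hβ : trF2 n β = 0) :
    ∃ x : GaloisField 2 n, x ^ 2 + x = β := by
  classical
  let ψ : GaloisField 2 n →+ GaloisField 2 n :=
    AddMonoidHom.mk' (fun x => x ^ 2 + x) (by
      intro a b
      show (a + b) ^ 2 + (a + b) = (a ^ 2 + a) + (b ^ 2 + b)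
      rw [gf_sq_add]; ring)
  let T : GaloisField 2 n →+ ZMod 2 :=
    (Algebra.trace (ZMod 2) (GaloisField 2 n)).toAddMonoidHom
  have hTsurj : Function.Surjective T := by
    intro t
    obtain ⟨y, hy⟩ := trace_exists_one n
    have ht : t = 0 ∨ t = 1 := by revert t; decide
    rcases ht with rfl | rfl
    · exact ⟨0, map_zero T⟩
    · exact ⟨y, hy⟩
  have hkerset : (ψ.ker : Set (GaloisField 2 n)) = {0, 1} := by
    ext x
    simp only [SetLike.mem_coe, AddMonoidHom.mem_ker, Set.mem_insert_iff,
      Set.mem_singleton_iff]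
    have hψx : ψ x = x ^ 2 + x := rfl
    rw [hψx]
    constructor
    · intro h
      have hfac : x * (x + 1) = 0 := by rw [← h]; ring
      rcases mul_eq_zero.mp hfac with h' | h'
      · exact Or.inl h'
      · exact Or.inr (gf_add_eq_zero_iff.mp h')
    · rintro (rfl | rfl)
      · simp
      · rw [one_pow]; exact gf_two_eq_zero 1
  have h3 : Nat.card ψ.ker = 2 := by
    calc Nat.card ψ.ker = ((ψ.ker : Set (GaloisField 2 n))).ncard :=
          Nat.card_coe_set_eq _
    _ = ({0, 1} : Set (GaloisField 2 n)).ncard := by rw [hkerset]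
    _ = 2 := Set.ncard_pair zero_ne_one
  have h6 : Nat.card T.range = 2 := by
    rw [T.range_eq_top_of_surjective hTsurj]
    calc Nat.card (⊤ : AddSubgroup (ZMod 2)) = Nat.card (ZMod 2) :=
          Nat.card_congr AddSubgroup.topEquiv.toEquiv
    _ = 2 := Nat.card_zmod 2
  have hcards : Nat.card ψ.range = Nat.card T.ker := by
    have h1 := AddSubgroup.card_eq_card_quotient_mul_card_addSubgroup ψ.ker
    have h2 : Nat.card (GaloisField 2 n ⧸ ψ.ker) = Nat.card ψ.range :=
      Nat.card_congr (QuotientAddGroup.quotientKerEquivRange ψ).toEquiv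
    have h4 := AddSubgroup.card_eq_card_quotient_mul_card_addSubgroup T.ker
    have h5 : Nat.card (GaloisField 2 n ⧸ T.ker) = Nat.card T.range :=
      Nat.card_congr (QuotientAddGroup.quotientKerEquivRange T).toEquiv
    rw [h2, h3] at h1
    rw [h5, h6] at h4
    omega
  have hsubset : (ψ.range : Set (GaloisField 2 n)) ⊆ (T.ker : Set (GaloisField 2 n)) := by
    rintro z hz
    obtain ⟨x, rfl⟩ := hz
    show T (ψ x) = 0
    have hψx : ψ x = x ^ 2 + x := rfl
    have hT : ∀ w, T w = trF2 n w := fun w => rfl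
    rw [hψx, hT, trF2_add, trF2_sq]
    generalize trF2 n x = t
    revert t; decide
  have hseteq : (ψ.range : Set (GaloisField 2 n)) = (T.ker : Set (GaloisField 2 n)) :=
    Set.eq_of_subset_of_ncard_le hsubset (by
      rw [← Nat.card_coe_set_eq, ← Nat.card_coe_set_eq]
      exact le_of_eq hcards.symm)
  have hβmem : β ∈ (T.ker : Set (GaloisField 2 n)) := hβ
  rw [← hseteq] at hβmem
  obtain ⟨x, hx⟩ := hβmem
  exact ⟨x, hx⟩


section Tower

variable {m : ℕ} (σ : GaloisField 2 m →+* GaloisField 2 (2 * m))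

lemma mem_range_iff_frob (hm : m ≠ 0) (z : GaloisField 2 (2 * m)) :
    z ^ 2 ^ m = z ↔ z ∈ Set.range σ := by
  classical
  set P : Polynomial (GaloisField 2 (2 * m)) := Polynomial.X ^ 2 ^ m - Polynomial.X with hP
  have hPne : P ≠ 0 :=
    FiniteField.X_pow_card_pow_sub_X_ne_zero (GaloisField 2 (2 * m)) hm one_lt_two
  have hPdeg : P.natDegree = 2 ^ m :=
    FiniteField.X_pow_card_pow_sub_X_natDegree_eq (GaloisField 2 (2 * m)) hm one_lt_two
  set B : Finset (GaloisField 2 (2 * m)) :=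
    Finset.univ.filter (fun w : GaloisField 2 (2 * m) => w ^ 2 ^ m = w) with hB
  have hsub : B ⊆ P.roots.toFinset := by
    intro w hw
    rw [Multiset.mem_toFinset, Polynomial.mem_roots hPne]
    show Polynomial.eval w P = 0
    rw [hP]
    simp only [Polynomial.eval_sub, Polynomial.eval_pow, Polynomial.eval_X]
    rw [sub_eq_zero]
    exact (Finset.mem_filter.mp hw).2
  have hcardB : B.card ≤ 2 ^ m := by
    calc B.card ≤ P.roots.toFinset.card := Finset.card_le_card hsub
    _ ≤ Multiset.card P.roots := Multiset.toFinset_card_le _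
    _ ≤ P.natDegree := Polynomial.card_roots' P
    _ = 2 ^ m := hPdeg
  have him : (Finset.univ.image σ) ⊆ B := by
    intro z hz
    obtain ⟨y, _, rfl⟩ := Finset.mem_image.mp hz
    rw [Finset.mem_filter]
    refine ⟨Finset.mem_univ _, ?_⟩
    rw [← map_pow, gf_pow_card hm y]
  have hcardim : (Finset.univ.image σ).card = 2 ^ m := by
    rw [Finset.card_image_of_injective _ σ.injective, Finset.card_univ, gf_card m hm]
  have hBim : Finset.univ.image σ = B :=
    Finset.eq_of_subset_of_card_le him (by rw [hcardim]; exact hcardB)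
  constructor
  · intro h
    have hzB : z ∈ B := Finset.mem_filter.mpr ⟨Finset.mem_univ _, h⟩
    rw [← hBim] at hzB
    obtain ⟨y, _, hy⟩ := Finset.mem_image.mp hzB
    exact ⟨y, hy⟩
  · rintro ⟨y, rfl⟩
    rw [← map_pow, gf_pow_card hm y]

lemma tr_tower (hm : 0 < m) {z : GaloisField 2 (2 * m)} {t : GaloisField 2 m}
    (ht : σ t = z + z ^ 2 ^ m) : trF2 (2 * m) z = trF2 m t := by
  classical
  have hm' : m ≠ 0 := hm.ne'
  have h2m : 2 * m ≠ 0 := by omega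
  letI : Algebra (GaloisField 2 m) (GaloisField 2 (2 * m)) := σ.toAlgebra
  have halg : algebraMap (GaloisField 2 m) (GaloisField 2 (2 * m)) = σ :=
    RingHom.algebraMap_toAlgebra σ
  haveI : IsScalarTower (ZMod 2) (GaloisField 2 m) (GaloisField 2 (2 * m)) :=
    IsScalarTower.of_algebraMap_eq' (RingHom.ext_zmod _ _)
  haveI : Module.Finite (GaloisField 2 m) (GaloisField 2 (2 * m)) :=
    Module.Finite.of_finite
  -- finrank = 2
  have hcardpow := Module.card_eq_pow_finrank (K := GaloisField 2 m) (V := GaloisField 2 (2 * m))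
  rw [gf_card _ hm', gf_card _ h2m, ← pow_mul] at hcardpow
  have hrank2 : Module.finrank (GaloisField 2 m) (GaloisField 2 (2 * m)) = 2 := by
    have h := Nat.pow_right_injective (le_refl 2) hcardpow
    have h' : m * 2 = m * Module.finrank (GaloisField 2 m) (GaloisField 2 (2 * m)) := by omega
    exact (Nat.eq_of_mul_eq_mul_left hm h').symm
  -- the Frobenius algebra automorphism
  let fr : GaloisField 2 (2 * m) →ₐ[GaloisField 2 m] GaloisField 2 (2 * m) :=
    { toFun := fun w => w ^ 2 ^ m
      map_one' := one_pow _
      map_mul' := fun a b => mul_pow a b _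
      map_zero' := zero_pow (by positivity)
      map_add' := fun a b => gf_pow_add a b
      commutes' := fun y => by
        show (algebraMap _ _ y) ^ 2 ^ m = algebraMap _ _ y
        rw [halg, ← map_pow, gf_pow_card hm' y] }
  have hfrinj : Function.Injective fr := fr.toRingHom.injective
  have hfrbij : Function.Bijective fr := Finite.injective_iff_bijective.mp hfrinj
  let ψ : GaloisField 2 (2 * m) ≃ₐ[GaloisField 2 m] GaloisField 2 (2 * m) :=
    AlgEquiv.ofBijective fr hfrbij
  have hψapp : ∀ w, ψ w = w ^ 2 ^ m := fun w => rfl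
  -- ψ is not the identity
  obtain ⟨g, hg⟩ := IsCyclic.exists_generator (α := (GaloisField 2 (2 * m))ˣ)
  have horder : orderOf g = 2 ^ (2 * m) - 1 := by
    rw [orderOf_eq_card_of_forall_mem_zpowers hg, Nat.card_eq_fintype_card,
      Fintype.card_units, gf_card _ h2m]
  have hψne : AlgEquiv.refl ≠ ψ := by
    intro h
    have h1 : ((g : GaloisField 2 (2 * m))) ^ 2 ^ m = g := by
      have := congrArg (fun e => e ((g : GaloisField 2 (2 * m)))) h
      simpa [hψapp] using this.symm
    have h2 : g ^ 2 ^ m = g ^ 1 := by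
      apply Units.ext
      rw [Units.val_pow_eq_pow_val, pow_one]
      exact h1
    have h3 : 2 ^ m ≡ 1 [MOD orderOf g] := pow_eq_pow_iff_modEq.mp h2
    have h4 : orderOf g ∣ 2 ^ m - 1 :=
      (Nat.modEq_iff_dvd' (Nat.one_le_two_pow)).mp h3.symm
    have h5 : 2 ^ m - 1 ≠ 0 := by
      have : (2:ℕ) ^ 1 ≤ 2 ^ m := Nat.pow_le_pow_right (by norm_num) hm
      omega
    have h6 := Nat.le_of_dvd (Nat.pos_of_ne_zero h5) h4
    rw [horder] at h6
    have h7 : 2 ^ m < 2 ^ (2 * m) := Nat.pow_lt_pow_right one_lt_two (by omega)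
    omega
  -- the automorphism group is {refl, ψ}
  have hcardaut : Fintype.card (GaloisField 2 (2 * m) ≃ₐ[GaloisField 2 m] GaloisField 2 (2 * m)) = 2 := by
    rw [← Nat.card_eq_fintype_card, IsGalois.card_aut_eq_finrank, hrank2]
  have huniv : (Finset.univ : Finset (GaloisField 2 (2 * m) ≃ₐ[GaloisField 2 m] GaloisField 2 (2 * m)))
      = {AlgEquiv.refl, ψ} := by
    symm
    apply Finset.eq_of_subset_of_card_le (Finset.subset_univ _)
    rw [Finset.card_univ, hcardaut,
      Finset.card_insert_of_notMem (by simpa using hψne), Finset.card_singleton]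
  -- compute the relative trace
  have hreltr : Algebra.trace (GaloisField 2 m) (GaloisField 2 (2 * m)) z = t := by
    apply σ.injective
    rw [← halg]
    rw [trace_eq_sum_automorphisms z, huniv, Finset.sum_pair hψne, halg, ht, hψapp]
    rfl
  have htt := Algebra.trace_trace (R := ZMod 2) (S := GaloisField 2 m)
    (T := GaloisField 2 (2 * m)) z
  rw [hreltr] at htt
  exact htt.symm

lemma tr_sub (hm : 0 < m) (k : GaloisField 2 m) : trF2 (2 * m) (σ k) = 0 := by
  have h : σ (0 : GaloisField 2 m) = σ k + (σ k) ^ 2 ^ m := by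
    rw [map_zero, ← map_pow, gf_pow_card hm.ne' k]
    exact (gf_two_eq_zero (σ k)).symm
  rw [tr_tower σ hm h, trF2, map_zero]

end Tower


lemma sum_comp_count {A : Type*} [Fintype A] {K : Type*} [Fintype K] [DecidableEq K]
    (g : A → K) (f : K → ℤ) :
    ∑ x : A, f (g x)
      = ∑ a : K, ((Finset.univ.filter (fun x : A => g x = a)).card : ℤ) * f a := by
  classical
  have h := Finset.sum_fiberwise_eq_sum_filter (Finset.univ : Finset A)
    (Finset.univ : Finset K) g (fun x => f (g x))
  rw [Finset.filter_true_of_mem (fun _ _ => Finset.mem_univ _)] at h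
  rw [← h]
  apply Finset.sum_congr rfl
  intro a _
  have hcongr : ∑ x ∈ Finset.univ.filter (fun x : A => g x = a), f (g x)
      = ∑ x ∈ Finset.univ.filter (fun x : A => g x = a), f a :=
    Finset.sum_congr rfl (fun x hx => by rw [(Finset.mem_filter.mp hx).2])
  rw [hcongr, Finset.sum_const, nsmul_eq_mul]

end Stmt14Aux


open Stmt14Aux in
/-- Lemma: for `n = 2m` and nonzero `γ ∈ F_{2^n}`,
`Σ_{x ∈ μ_{2^m+1}} (-1)^{Tr(γx)} = 1 - K_m(γ·γ̄)`, where `γ·γ̄ = γ^{2^m+1}` is identified with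
an element `c` of `F_{2^m}` via a field embedding `σ : F_{2^m} → F_{2^n}`. -/
theorem stmt14 (m : ℕ) (hm : 0 < m) (γ : GaloisField 2 (2 * m)) (hγ : γ ≠ 0)
    (σ : GaloisField 2 m →+* GaloisField 2 (2 * m))
    (c : GaloisField 2 m) (hc : σ c = γ ^ (2 ^ m + 1)) :
    ∑ x : {z : GaloisField 2 (2 * m) // z ^ (2 ^ m + 1) = 1},
        (-1 : ℤ) ^ (trF2 (2 * m) (γ * x.1)).val =
      1 - kloo m c := by
  classical
  have hm' : m ≠ 0 := hm.ne'
  have h2m : 2 * m ≠ 0 := by omega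
  have hq1 : (1 : ℕ) ≤ 2 ^ m := Nat.one_le_two_pow
  -- square root u₀ of γ^(2^m - 1)
  obtain ⟨u₀, hu₀⟩ := gf_sq_surj (γ ^ (2 ^ m - 1))
  have hγpow_ne : γ ^ (2 ^ m - 1) ≠ 0 := pow_ne_zero _ hγ
  have hu₀ne : u₀ ≠ 0 := by
    intro h; rw [h, zero_pow two_ne_zero] at hu₀; exact hγpow_ne hu₀.symm
  have hγq : γ ^ 2 ^ m = γ * u₀ ^ 2 := by
    rw [hu₀]
    have h1 : 2 ^ m = 1 + (2 ^ m - 1) := by omega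
    conv_lhs => rw [h1]
    rw [pow_add, pow_one]
  have hγcard : γ ^ (2 ^ (2 * m) - 1) = 1 := by
    have h := FiniteField.pow_card_sub_one_eq_one γ hγ
    rwa [gf_card _ h2m] at h
  have hqq : (2 ^ m - 1) * (2 ^ m + 1) = 2 ^ (2 * m) - 1 := by
    have h2 : 2 ^ (2 * m) = 2 ^ m * 2 ^ m := by rw [two_mul, pow_add]
    obtain ⟨k, hk⟩ : ∃ k, 2 ^ m = k + 1 := ⟨2 ^ m - 1, by omega⟩
    rw [hk] at h2 ⊢
    have hh : k * (k + 1 + 1) + 1 = (k + 1) * (k + 1) := by ring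
    simp only [Nat.add_sub_cancel]
    omega
  have hu₀μ : u₀ ^ (2 ^ m + 1) = 1 := by
    apply gf_sq_inj
    rw [one_pow]
    calc (u₀ ^ (2 ^ m + 1)) ^ 2 = (u₀ ^ 2) ^ (2 ^ m + 1) := by
          rw [← pow_mul, ← pow_mul, Nat.mul_comm (2 ^ m + 1) 2]
    _ = γ ^ ((2 ^ m - 1) * (2 ^ m + 1)) := by rw [hu₀, ← pow_mul]
    _ = 1 := by rw [hqq, hγcard]
  -- b with σ b = γ u₀
  have hstep : (γ * u₀) ^ 2 ^ m * u₀ = (γ * u₀) * u₀ := by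
    have e1 : (γ * u₀) ^ 2 ^ m * u₀ = γ ^ 2 ^ m * (u₀ ^ 2 ^ m * u₀) := by
      rw [mul_pow]; ring
    rw [e1, ← pow_succ, hu₀μ, mul_one, hγq]; ring
  have hγu₀fix : (γ * u₀) ^ 2 ^ m = γ * u₀ := mul_right_cancel₀ hu₀ne hstep
  obtain ⟨b, hb⟩ := (mem_range_iff_frob σ hm' (γ * u₀)).mp hγu₀fix
  have hbne : b ≠ 0 := by
    intro h; rw [h, map_zero] at hb
    exact (mul_ne_zero hγ hu₀ne) hb.symm
  have hbsq : b ^ 2 = c := by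
    apply σ.injective
    rw [map_pow, hb, hc, mul_pow, hu₀, ← pow_add]
    congr 1
    omega
  -- μ facts
  have hμne : ∀ x : {z : GaloisField 2 (2 * m) // z ^ (2 ^ m + 1) = 1},
      (x : GaloisField 2 (2 * m)) ≠ 0 := by
    intro x h
    have h2 := x.2
    rw [h, zero_pow (by positivity)] at h2
    exact zero_ne_one h2
  have hμq : ∀ x : {z : GaloisField 2 (2 * m) // z ^ (2 ^ m + 1) = 1},
      (x : GaloisField 2 (2 * m)) ^ 2 ^ m = (x : GaloisField 2 (2 * m))⁻¹ := by
    intro x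
    have h1 : (x : GaloisField 2 (2 * m)) ^ 2 ^ m * x = 1 := by
      rw [← pow_succ]; exact x.2
    exact eq_inv_of_mul_eq_one_right
      (by rw [mul_comm ((x : GaloisField 2 (2 * m))) ((x : GaloisField 2 (2 * m)) ^ 2 ^ m)]
          exact h1)
  -- the "s" function on μ
  have hsfun : ∀ x : {z : GaloisField 2 (2 * m) // z ^ (2 ^ m + 1) = 1},
      ∃ t : GaloisField 2 m,
        σ t = (x : GaloisField 2 (2 * m)) + (x : GaloisField 2 (2 * m))⁻¹ := by
    intro x
    apply (mem_range_iff_frob σ hm' _).mp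
    rw [gf_pow_add, hμq x, inv_pow, hμq x, inv_inv]
    exact add_comm _ _
  choose s hs using hsfun
  -- the character function
  let f : GaloisField 2 m → ℤ := fun a => (-1 : ℤ) ^ (trF2 m (b * a)).val
  have hfapp : ∀ a, f a = (-1 : ℤ) ^ (trF2 m (b * a)).val := fun a => rfl
  have hbfix : (σ b) ^ 2 ^ m = σ b := by rw [← map_pow, gf_pow_card hm' b]
  -- Step A : rewrite the μ-sum
  have hu₀inv : (u₀⁻¹) ^ (2 ^ m + 1) = 1 := by rw [inv_pow, hu₀μ, inv_one]
  let e : {z : GaloisField 2 (2 * m) // z ^ (2 ^ m + 1) = 1}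
      ≃ {z : GaloisField 2 (2 * m) // z ^ (2 ^ m + 1) = 1} :=
    { toFun := fun x => ⟨u₀ * x, by rw [mul_pow, hu₀μ, x.2, mul_one]⟩
      invFun := fun x => ⟨u₀⁻¹ * x, by rw [mul_pow, hu₀inv, x.2, mul_one]⟩
      left_inv := fun x => by
        apply Subtype.ext
        show u₀⁻¹ * (u₀ * x) = x
        rw [← mul_assoc, inv_mul_cancel₀ hu₀ne, one_mul]
      right_inv := fun x => by
        apply Subtype.ext
        show u₀ * (u₀⁻¹ * x) = x
        rw [← mul_assoc, mul_inv_cancel₀ hu₀ne, one_mul] }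
  have hA : (∑ x : {z : GaloisField 2 (2 * m) // z ^ (2 ^ m + 1) = 1},
        (-1 : ℤ) ^ (trF2 (2 * m) (γ * x.1)).val)
      = ∑ x : {z : GaloisField 2 (2 * m) // z ^ (2 ^ m + 1) = 1}, f (s x) := by
    conv_lhs => rw [← Equiv.sum_comp e
      (fun x : {z : GaloisField 2 (2 * m) // z ^ (2 ^ m + 1) = 1} =>
        (-1 : ℤ) ^ (trF2 (2 * m) (γ * x.1)).val)]
    apply Finset.sum_congr rfl
    intro x _
    have h1 : γ * ((e x) : GaloisField 2 (2 * m)) = σ b * x := by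
      show γ * (u₀ * x) = σ b * x
      rw [hb]; ring
    show (-1 : ℤ) ^ (trF2 (2 * m) (γ * ((e x) : GaloisField 2 (2 * m)))).val = f (s x)
    rw [h1, hfapp]
    have h2 : trF2 (2 * m) (σ b * (x : GaloisField 2 (2 * m))) = trF2 m (b * s x) := by
      apply tr_tower σ hm
      rw [map_mul, hs x, mul_pow, hbfix, hμq x]
      ring
    rw [h2]
  -- Step C : rewrite the Kloosterman sum
  have hC : kloo m c = ∑ y : GaloisField 2 m, f (y + y⁻¹) := by
    unfold kloo
    rw [← Equiv.sum_comp (Equiv.mulLeft₀ b⁻¹ (inv_ne_zero hbne))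
      (fun y : GaloisField 2 m => (-1 : ℤ) ^ (trF2 m (c * y + y⁻¹)).val)]
    apply Finset.sum_congr rfl
    intro y _
    show (-1 : ℤ) ^ (trF2 m (c * ((Equiv.mulLeft₀ b⁻¹ (inv_ne_zero hbne)) y)
        + (((Equiv.mulLeft₀ b⁻¹ (inv_ne_zero hbne)) y))⁻¹)).val = f (y + y⁻¹)
    have happ : (Equiv.mulLeft₀ b⁻¹ (inv_ne_zero hbne)) y = b⁻¹ * y := rfl
    rw [happ, hfapp]
    have harg : c * (b⁻¹ * y) + (b⁻¹ * y)⁻¹ = b * (y + y⁻¹) := by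
      rcases eq_or_ne y 0 with rfl | hy
      · simp
      · rw [← hbsq]; field_simp
    rw [harg]
  -- the fiber counting
  have hcount : ∀ a : GaloisField 2 m,
      (Finset.univ.filter
          (fun x : {z : GaloisField 2 (2 * m) // z ^ (2 ^ m + 1) = 1} => s x = a)).card
      + (Finset.univ.filter (fun y : GaloisField 2 m => y + y⁻¹ = a)).card
      = if a = 0 then 3 else 2 := by
    intro a
    by_cases ha : a = 0
    · subst ha
      rw [if_pos rfl]
      have hμ1 : Finset.univ.filter
          (fun x : {z : GaloisField 2 (2 * m) // z ^ (2 ^ m + 1) = 1} => s x = 0)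
          = {(⟨1, by rw [one_pow]⟩ : {z : GaloisField 2 (2 * m) // z ^ (2 ^ m + 1) = 1})} := by
        ext x
        simp only [Finset.mem_filter, Finset.mem_univ, true_and, Finset.mem_singleton]
        constructor
        · intro h
          have hxval : (x : GaloisField 2 (2 * m)) + (x : GaloisField 2 (2 * m))⁻¹ = 0 := by
            rw [← hs x, h, map_zero]
          have h1 : (x : GaloisField 2 (2 * m)) = (x : GaloisField 2 (2 * m))⁻¹ :=
            gf_add_eq_zero_iff.mp hxval
          have h2 : (x : GaloisField 2 (2 * m)) ^ 2 = 1 := by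
            rw [sq]
            nth_rewrite 2 [h1]
            exact mul_inv_cancel₀ (hμne x)
          exact Subtype.ext (gf_sq_inj (by rw [h2, one_pow]))
        · rintro rfl
          apply σ.injective
          rw [hs _, map_zero]
          show (1 : GaloisField 2 (2 * m)) + 1⁻¹ = 0
          rw [inv_one]; exact gf_two_eq_zero 1
      have hK2 : Finset.univ.filter (fun y : GaloisField 2 m => y + y⁻¹ = 0) = {0, 1} := by
        ext y
        simp only [Finset.mem_filter, Finset.mem_univ, true_and, Finset.mem_insert,
          Finset.mem_singleton]
        constructor
        · intro h
          rcases eq_or_ne y 0 with rfl | hy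
          · exact Or.inl rfl
          · refine Or.inr ?_
            have h1 : y = y⁻¹ := gf_add_eq_zero_iff.mp h
            have h2 : y ^ 2 = 1 := by
              rw [sq]
              nth_rewrite 2 [h1]
              exact mul_inv_cancel₀ hy
            exact gf_sq_inj (by rw [h2, one_pow])
        · rintro (rfl | rfl)
          · rw [inv_zero, add_zero]
          · rw [inv_one]; exact gf_two_eq_zero 1
      rw [hμ1, hK2, Finset.card_singleton,
        Finset.card_insert_of_notMem (by simp), Finset.card_singleton]
    · rw [if_neg ha]
      obtain ⟨α', hαdef⟩ : ∃ w : GaloisField 2 (2 * m), w = σ a := ⟨_, rfl⟩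
      have hαne : α' ≠ 0 := fun h => ha (σ.injective (by rw [← hαdef, h, map_zero]))
      have htr0 : trF2 (2 * m) (σ (a⁻¹ ^ 2)) = 0 := tr_sub σ hm _
      obtain ⟨v, hv⟩ := exists_AS htr0
      have hαinv : σ (a⁻¹ ^ 2) = (α'⁻¹) ^ 2 := by rw [map_pow, map_inv₀, ← hαdef]
      rw [hαinv] at hv
      obtain ⟨x₁, hx₁def⟩ : ∃ w : GaloisField 2 (2 * m), w = α' * v := ⟨_, rfl⟩
      have hx₁ : x₁ ^ 2 + α' * x₁ + 1 = 0 := by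
        have h1 : α' ^ 2 * (v ^ 2 + v) = 1 := by
          rw [hv, ← mul_pow, mul_inv_cancel₀ hαne, one_pow]
        calc x₁ ^ 2 + α' * x₁ + 1 = α' ^ 2 * (v ^ 2 + v) + 1 := by rw [hx₁def]; ring
        _ = 1 + 1 := by rw [h1]
        _ = 0 := gf_two_eq_zero 1
      have hx₁ne : x₁ ≠ 0 := by
        intro h
        rw [h] at hx₁
        simp at hx₁
      have hsum12 : x₁ ^ 2 + α' * x₁ = 1 := gf_add_eq_zero_iff.mp hx₁
      obtain ⟨x₂, hx₂def⟩ : ∃ w : GaloisField 2 (2 * m), w = α' + x₁ := ⟨_, rfl⟩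
      have hprod : x₁ * x₂ = 1 := by rw [hx₂def, ← hsum12]; ring
      have hx₂ne : x₂ ≠ 0 := by
        intro h; rw [h, mul_zero] at hprod; exact zero_ne_one hprod
      have hx₁inv : x₁⁻¹ = x₂ := inv_eq_of_mul_eq_one_right hprod
      have hx₂inv : x₂⁻¹ = x₁ := inv_eq_of_mul_eq_one_right (by rw [mul_comm x₂ x₁]; exact hprod)
      have hsumx : x₁ + x₂ = α' := by
        rw [hx₂def]
        calc x₁ + (α' + x₁) = α' + (x₁ + x₁) := by ring
        _ = α' := by rw [gf_two_eq_zero, add_zero]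
      have hne12 : x₁ ≠ x₂ := by
        intro h
        have h1 : x₁ ^ 2 = 1 := by
          rw [← h] at hprod; rw [sq]; exact hprod
        have h2 : x₁ = 1 := gf_sq_inj (by rw [h1, one_pow])
        apply hαne
        rw [← hsumx, ← h]
        exact gf_two_eq_zero x₁
      have hroots : ∀ w : GaloisField 2 (2 * m),
          w ^ 2 + α' * w + 1 = 0 ↔ (w = x₁ ∨ w = x₂) := by
        intro w
        constructor
        · intro hw
          have hfac : (w + x₁) * (w + x₂) = 0 := by
            calc (w + x₁) * (w + x₂) = w ^ 2 + (x₁ + x₂) * w + x₁ * x₂ := by ring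
            _ = w ^ 2 + α' * w + 1 := by rw [hsumx, hprod]
            _ = 0 := hw
          rcases mul_eq_zero.mp hfac with h' | h'
          · exact Or.inl (gf_add_eq_zero_iff.mp h')
          · exact Or.inr (gf_add_eq_zero_iff.mp h')
        · rintro (h' | h')
          · rw [h']; exact hx₁
          · rw [h']
            rw [← hsumx, ← hprod]
            have hstep2 : x₂ ^ 2 + (x₁ + x₂) * x₂ + x₁ * x₂
                = (x₂ ^ 2 + x₂ ^ 2) + (x₁ * x₂ + x₁ * x₂) := by ring
            rw [hstep2, gf_two_eq_zero, gf_two_eq_zero, add_zero]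
      have hquad : ∀ w : GaloisField 2 (2 * m), w ≠ 0 → w + w⁻¹ = α' →
          (w = x₁ ∨ w = x₂) := by
        intro w hw h
        apply (hroots w).mp
        have h1 : w * (w + w⁻¹) = α' * w := by rw [h]; ring
        rw [mul_add, mul_inv_cancel₀ hw, ← sq] at h1
        calc w ^ 2 + α' * w + 1 = (w ^ 2 + 1) + α' * w := by ring
        _ = α' * w + α' * w := by rw [h1]
        _ = 0 := gf_two_eq_zero _
      have hquadrev : ∀ w : GaloisField 2 (2 * m), (w = x₁ ∨ w = x₂) → w + w⁻¹ = α' := by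
        rintro w (rfl | rfl)
        · rw [hx₁inv]; exact hsumx
        · rw [hx₂inv, add_comm]; exact hsumx
      have hαfix : α' ^ 2 ^ m = α' := by rw [hαdef, ← map_pow, gf_pow_card hm' a]
      have hx1q : x₁ ^ 2 ^ m = x₁ ∨ x₁ ^ 2 ^ m = x₂ := by
        apply (hroots _).mp
        have hexp : (x₁ ^ 2 ^ m) ^ 2 + α' * x₁ ^ 2 ^ m + 1
            = (x₁ ^ 2 + α' * x₁ + 1) ^ 2 ^ m := by
          rw [gf_pow_add, gf_pow_add, one_pow, mul_pow, hαfix, ← pow_mul, ← pow_mul,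
            Nat.mul_comm (2 ^ m) 2]
        rw [hexp, hx₁, zero_pow (by positivity)]
      rcases hx1q with hfix | hflip
      · -- both roots lie in the image of σ
        have hx₂fix : x₂ ^ 2 ^ m = x₂ := by
          rw [← hx₁inv, inv_pow, hfix]
        obtain ⟨y₁, hy₁⟩ := (mem_range_iff_frob σ hm' x₁).mp hfix
        obtain ⟨y₂, hy₂⟩ := (mem_range_iff_frob σ hm' x₂).mp hx₂fix
        have hμ0 : Finset.univ.filter
            (fun x : {z : GaloisField 2 (2 * m) // z ^ (2 ^ m + 1) = 1} => s x = a) = ∅ := by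
          rw [Finset.filter_eq_empty_iff]
          intro x _ hxa
          have hxval : (x : GaloisField 2 (2 * m)) + (x : GaloisField 2 (2 * m))⁻¹ = α' := by
            rw [hαdef, ← hxa]
            exact (hs x).symm
          rcases hquad _ (hμne x) hxval with h' | h'
          · apply hne12
            have h2 := hμq x
            rw [h'] at h2
            rw [hfix, hx₁inv] at h2
            exact h2
          · apply hne12
            have h2 := hμq x
            rw [h'] at h2
            rw [hx₂fix, hx₂inv] at h2
            exact h2.symm
        have hK2 : Finset.univ.filter (fun y : GaloisField 2 m => y + y⁻¹ = a) = {y₁, y₂} := by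
          ext y
          simp only [Finset.mem_filter, Finset.mem_univ, true_and, Finset.mem_insert,
            Finset.mem_singleton]
          constructor
          · intro h
            have hyne : y ≠ 0 := by
              intro h0; rw [h0, inv_zero, add_zero] at h; exact ha h.symm
            have hσy : σ y + (σ y)⁻¹ = α' := by
              rw [hαdef, ← h, map_add, map_inv₀]
            have hσyne : σ y ≠ 0 := fun hh => hyne (σ.injective (by rw [hh, map_zero]))
            rcases hquad _ hσyne hσy with h' | h'
            · exact Or.inl (σ.injective (by rw [h', hy₁]))
            · exact Or.inr (σ.injective (by rw [h', hy₂]))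
          · rintro (rfl | rfl)
            · apply σ.injective
              rw [map_add, map_inv₀, hy₁, ← hαdef]
              exact hquadrev x₁ (Or.inl rfl)
            · apply σ.injective
              rw [map_add, map_inv₀, hy₂, ← hαdef]
              exact hquadrev x₂ (Or.inr rfl)
        have hy12ne : y₁ ≠ y₂ := by
          intro h; apply hne12; rw [← hy₁, ← hy₂, h]
        rw [hμ0, hK2, Finset.card_empty,
          Finset.card_insert_of_notMem (by simp only [Finset.mem_singleton]; exact hy12ne),
          Finset.card_singleton]
      · -- both roots lie in μ
        have hx₁μ : x₁ ^ (2 ^ m + 1) = 1 := by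
          rw [pow_succ, hflip, mul_comm x₂ x₁]; exact hprod
        have hx₂q : x₂ ^ 2 ^ m = x₁ := by
          rw [← hx₁inv, inv_pow, hflip]; exact hx₂inv
        have hx₂μ : x₂ ^ (2 ^ m + 1) = 1 := by
          rw [pow_succ, hx₂q]; exact hprod
        have hμ2 : Finset.univ.filter
            (fun x : {z : GaloisField 2 (2 * m) // z ^ (2 ^ m + 1) = 1} => s x = a)
            = {(⟨x₁, hx₁μ⟩ : {z : GaloisField 2 (2 * m) // z ^ (2 ^ m + 1) = 1}),
               ⟨x₂, hx₂μ⟩} := by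
          ext x
          simp only [Finset.mem_filter, Finset.mem_univ, true_and, Finset.mem_insert,
            Finset.mem_singleton]
          constructor
          · intro hxa
            have hxval : (x : GaloisField 2 (2 * m)) + (x : GaloisField 2 (2 * m))⁻¹ = α' := by
              rw [hαdef, ← hxa]
              exact (hs x).symm
            rcases hquad _ (hμne x) hxval with h' | h'
            · exact Or.inl (Subtype.ext h')
            · exact Or.inr (Subtype.ext h')
          · rintro (rfl | rfl)
            · apply σ.injective
              rw [hs _]
              show x₁ + x₁⁻¹ = σ a
              rw [← hαdef]
              exact hquadrev x₁ (Or.inl rfl)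
            · apply σ.injective
              rw [hs _]
              show x₂ + x₂⁻¹ = σ a
              rw [← hαdef]
              exact hquadrev x₂ (Or.inr rfl)
        have hK0 : Finset.univ.filter (fun y : GaloisField 2 m => y + y⁻¹ = a) = ∅ := by
          rw [Finset.filter_eq_empty_iff]
          intro y _ h
          have hyne : y ≠ 0 := by
            intro h0; rw [h0, inv_zero, add_zero] at h; exact ha h.symm
          have hσy : σ y + (σ y)⁻¹ = α' := by
            rw [hαdef, ← h, map_add, map_inv₀]
          have hσyne : σ y ≠ 0 := fun hh => hyne (σ.injective (by rw [hh, map_zero]))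
          have hσyfix : (σ y) ^ 2 ^ m = σ y := by rw [← map_pow, gf_pow_card hm' y]
          rcases hquad _ hσyne hσy with h' | h'
          · rw [h', hflip] at hσyfix
            exact hne12 hσyfix.symm
          · rw [h', hx₂q] at hσyfix
            exact hne12 hσyfix
        have hXne : (⟨x₁, hx₁μ⟩ : {z : GaloisField 2 (2 * m) // z ^ (2 ^ m + 1) = 1})
            ≠ ⟨x₂, hx₂μ⟩ := by
          intro h; exact hne12 (congrArg Subtype.val h)
        rw [hμ2, hK0, Finset.card_empty,
          Finset.card_insert_of_notMem (by simp only [Finset.mem_singleton]; exact hXne),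
          Finset.card_singleton]
  -- assemble
  have hsum1 := sum_comp_count s f
  have hsum2 := sum_comp_count (fun y : GaloisField 2 m => y + y⁻¹) f
  have h0 : ∑ a : GaloisField 2 m, f a = 0 := sum_char_eq_zero hbne
  have hf0 : f 0 = 1 := by
    rw [hfapp, mul_zero]
    have hz : trF2 m (0 : GaloisField 2 m) = 0 :=
      map_zero (Algebra.trace (ZMod 2) (GaloisField 2 m))
    rw [hz]
    simp
  have htot : (∑ x : {z : GaloisField 2 (2 * m) // z ^ (2 ^ m + 1) = 1}, f (s x))
      + (∑ y : GaloisField 2 m, f (y + y⁻¹)) = 1 := by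
    rw [hsum1, hsum2, ← Finset.sum_add_distrib]
    have hterm : ∀ a : GaloisField 2 m,
        ((Finset.univ.filter
            (fun x : {z : GaloisField 2 (2 * m) // z ^ (2 ^ m + 1) = 1} => s x = a)).card : ℤ)
              * f a
          + ((Finset.univ.filter (fun y : GaloisField 2 m => y + y⁻¹ = a)).card : ℤ) * f a
        = 2 * f a + (if a = 0 then f 0 else 0) := by
      intro a
      rw [← add_mul]
      have hc' := hcount a
      by_cases ha : a = 0
      · rw [if_pos ha] at hc' ⊢
        rw [ha]
        rw [show ((Finset.univ.filter
            (fun x : {z : GaloisField 2 (2 * m) // z ^ (2 ^ m + 1) = 1} => s x = 0)).card : ℤ)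
            + ((Finset.univ.filter (fun y : GaloisField 2 m => y + y⁻¹ = 0)).card : ℤ)
            = 3 by exact_mod_cast (ha ▸ hc')]
        ring
      · rw [if_neg ha] at hc' ⊢
        rw [show ((Finset.univ.filter
            (fun x : {z : GaloisField 2 (2 * m) // z ^ (2 ^ m + 1) = 1} => s x = a)).card : ℤ)
            + ((Finset.univ.filter (fun y : GaloisField 2 m => y + y⁻¹ = a)).card : ℤ)
            = 2 by exact_mod_cast hc']
        ring
    rw [Finset.sum_congr rfl (fun a _ => hterm a), Finset.sum_add_distrib, ← Finset.mul_sum,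
      h0, mul_zero, zero_add]
    rw [Finset.sum_ite_eq' Finset.univ (0 : GaloisField 2 m) (fun _ => f 0),
      if_pos (Finset.mem_univ _), hf0]
  rw [hA, hC]
  omega
end

section
/- Let n ≥ 3 be a positive integer and γ ∈ F_{2^n}. Then K_n(γ) ≡ 0 (mod 8) if Tr(γ) = 0, and K_n(γ) ≡ 4 (mod 8) if Tr(γ) = 1. -/
open scoped BigOperators Classical

namespace Stmt17aux

variable {n : ℕ}

lemma tr_add (x y : GaloisField 2 n) : trF2 n (x + y) = trF2 n x + trF2 n y :=
  map_add (Algebra.trace (ZMod 2) (GaloisField 2 n)) x y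

lemma tr_zero : trF2 n (0 : GaloisField 2 n) = 0 :=
  map_zero (Algebra.trace (ZMod 2) (GaloisField 2 n))

lemma two_eq_zero : (2 : GaloisField 2 n) = 0 := by
  have : CharP (GaloisField 2 n) 2 := inferInstance
  exact_mod_cast CharP.cast_eq_zero (GaloisField 2 n) 2

noncomputable def frobAlg (n : ℕ) : GaloisField 2 n ≃ₐ[ZMod 2] GaloisField 2 n :=
  AlgEquiv.ofRingEquiv (f := frobeniusEquiv (GaloisField 2 n) 2)
    (fun c => by
      show frobenius (GaloisField 2 n) 2 _ = _
      rw [frobenius_def, ← map_pow, ZMod.pow_card])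

lemma tr_sq (x : GaloisField 2 n) : trF2 n (x ^ 2) = trF2 n x := by
  have := Algebra.trace_eq_of_algEquiv (frobAlg n) x
  simpa [frobAlg, AlgEquiv.ofRingEquiv, frobeniusEquiv_def, trF2, frobenius_def] using this

lemma tr_exists_one (n : ℕ) : ∃ b : GaloisField 2 n, trF2 n b = 1 := by
  by_contra h
  push_neg at h
  have h0 : ∀ b : GaloisField 2 n, trF2 n b = 0 := by
    intro b
    have hb := h b
    revert hb
    generalize trF2 n b = a
    revert a; decide
  have nd := traceForm_nondegenerate (ZMod 2) (GaloisField 2 n)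
  have : (1 : GaloisField 2 n) = 0 := nd.1 1 (fun y => by
    simpa [Algebra.traceForm_apply, trF2] using h0 (1 * y))
  exact one_ne_zero this

lemma zmod2_add_self (a : ZMod 2) : a + a = 0 := by revert a; decide

lemma tr_sq' (z : GaloisField 2 n) : trF2 n (z * z + z) = 0 := by
  rw [tr_add, ← sq, tr_sq, zmod2_add_self]

/-- fibers of `z ↦ z^2 + z` -/
lemma sq_add_fiber {z w : GaloisField 2 n} (h : w ^ 2 + w = z ^ 2 + z) :
    w = z ∨ w = z + 1 := by
  have h2 : (2 : GaloisField 2 n) = 0 := two_eq_zero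
  have key : (w + z) * (w + z + 1) = 0 := by
    linear_combination h + (z ^ 2 + z + w * z) * h2
  rcases mul_eq_zero.1 key with h' | h'
  · left; linear_combination h' - z * h2
  · right; linear_combination h' - (z + 1) * h2

lemma card_ker_tr (hn : n ≠ 0) :
    2 * (Finset.univ.filter (fun x : GaloisField 2 n => trF2 n x = 0)).card = 2 ^ n := by
  obtain ⟨b, hb⟩ := tr_exists_one n
  classical
  set K := Finset.univ.filter (fun x : GaloisField 2 n => trF2 n x = 0) with hK
  set K1 := Finset.univ.filter (fun x : GaloisField 2 n => ¬ trF2 n x = 0) with hK1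
  have hcards : K.card + K1.card = Fintype.card (GaloisField 2 n) :=
    Finset.card_filter_add_card_filter_not _
  have hbij : K.card = K1.card := by
    apply Finset.card_bij (fun x _ => x + b)
    · intro x hx
      simp only [hK, hK1, Finset.mem_filter, Finset.mem_univ, true_and] at hx ⊢
      rw [tr_add, hx, hb]; decide
    · intro x hx y hy hxy
      exact add_right_cancel hxy
    · intro y hy
      refine ⟨y + b, ?_, by linear_combination b * (two_eq_zero (n := n))⟩
      simp only [hK, hK1, Finset.mem_filter, Finset.mem_univ, true_and] at hy ⊢
      rw [tr_add, hb]
      revert hy; generalize trF2 n y = a; revert a; decide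
  have hcard : Fintype.card (GaloisField 2 n) = 2 ^ n := by
    rw [← Nat.card_eq_fintype_card, GaloisField.card 2 n hn]
  omega

lemma artin_schreier (hn : n ≠ 0) {c : GaloisField 2 n} (hc : trF2 n c = 0) :
    ∃ z : GaloisField 2 n, z ^ 2 + z = c := by
  classical
  set φ : GaloisField 2 n → GaloisField 2 n := fun z => z ^ 2 + z with hφ
  set I := Finset.univ.image φ with hI
  set K := Finset.univ.filter (fun x : GaloisField 2 n => trF2 n x = 0) with hK
  have hIK : I ⊆ K := by
    intro x hx
    simp only [hI, Finset.mem_image] at hx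
    obtain ⟨z, _, rfl⟩ := hx
    simp only [hK, Finset.mem_filter, Finset.mem_univ, true_and, hφ]
    have := tr_sq' (n := n) z
    rwa [← sq] at this
  have hfib : ∀ b ∈ I, (Finset.univ.filter (fun z => φ z = b)).card = 2 := by
    intro b hb
    simp only [hI, Finset.mem_image] at hb
    obtain ⟨z, _, rfl⟩ := hb
    have : Finset.univ.filter (fun w => φ w = φ z) = {z, z + 1} := by
      ext w
      simp only [Finset.mem_filter, Finset.mem_univ, true_and, Finset.mem_insert,
        Finset.mem_singleton, hφ]
      constructor
      · exact fun h => sq_add_fiber h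
      · rintro (rfl | rfl)
        · rfl
        · linear_combination (z + 1) * (two_eq_zero (n := n))
    rw [this]
    rw [Finset.card_insert_of_notMem, Finset.card_singleton]
    simp only [Finset.mem_singleton]
    intro h
    have : (1 : GaloisField 2 n) = 0 := by linear_combination -h
    exact one_ne_zero this
  have hcount : 2 * I.card = 2 ^ n := by
    have := Finset.card_eq_sum_card_fiberwise
      (f := φ) (s := (Finset.univ : Finset (GaloisField 2 n))) (t := I)
      (fun x _ => Finset.mem_image_of_mem φ (Finset.mem_univ x))
    rw [Finset.sum_congr rfl hfib, Finset.sum_const, smul_eq_mul] at this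
    have hcard : Fintype.card (GaloisField 2 n) = 2 ^ n := by
      rw [← Nat.card_eq_fintype_card, GaloisField.card 2 n hn]
    rw [Finset.card_univ, hcard] at this
    omega
  have hKcard := card_ker_tr (n := n) hn
  rw [← hK] at hKcard
  have : I = K := Finset.eq_of_subset_of_card_le hIK (by omega)
  have hcK : c ∈ K := by simp [hK, hc]
  rw [← this, hI] at hcK
  simp only [Finset.mem_image, Finset.mem_univ, true_and] at hcK
  exact hcK

lemma neg_one_pow_add_one (a : ZMod 2) : (-1 : ℤ) ^ ((a + 1).val) = -(-1 : ℤ) ^ a.val := by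
  revert a; decide

lemma neg_one_pow_val (a : ZMod 2) : (-1 : ℤ) ^ a.val = 1 - 2 * (a.val : ℤ) := by
  revert a; decide

lemma char_sum (n : ℕ) : ∑ x : GaloisField 2 n, (-1 : ℤ) ^ (trF2 n x).val = 0 := by
  obtain ⟨b, hb⟩ := tr_exists_one n
  have hbij : Function.Bijective (fun x : GaloisField 2 n => x + b) :=
    (Equiv.addRight b).bijective
  have key : ∑ x : GaloisField 2 n, (-1 : ℤ) ^ (trF2 n (x + b)).val
      = ∑ x : GaloisField 2 n, (-1 : ℤ) ^ (trF2 n x).val :=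
    Fintype.sum_bijective _ hbij _ _ (fun x => rfl)
  have key2 : ∀ x : GaloisField 2 n,
      (-1 : ℤ) ^ (trF2 n (x + b)).val = -(-1 : ℤ) ^ (trF2 n x).val := by
    intro x
    rw [tr_add, hb, neg_one_pow_add_one]
  rw [Finset.sum_congr rfl (fun x _ => key2 x), Finset.sum_neg_distrib] at key
  linarith [key]

lemma kloo_zero (n : ℕ) : kloo n 0 = 0 := by
  rw [kloo]
  simp only [zero_mul, zero_add]
  have hbij : Function.Bijective (fun x : GaloisField 2 n => x⁻¹) :=
    Function.Involutive.bijective (fun x => inv_inv x)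
  have : ∑ x : GaloisField 2 n, (-1 : ℤ) ^ (trF2 n x⁻¹).val
      = ∑ x : GaloisField 2 n, (-1 : ℤ) ^ (trF2 n x).val :=
    Fintype.sum_bijective _ hbij _ _ (fun x => rfl)
  rw [this, char_sum]

lemma sq_eq_one {y : GaloisField 2 n} (h : y * y = 1) : y = 1 := by
  have h2 : (2 : GaloisField 2 n) = 0 := two_eq_zero
  have key : (y + 1) * (y + 1) = 0 := by linear_combination h + (y + 1) * h2
  have h' : y + 1 = 0 := by
    rcases mul_eq_zero.1 key with h' | h' <;> exact h'
  linear_combination h' - h2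

lemma tr_inv_of_root {t y : GaloisField 2 n} (ht : t ≠ 0) (hy0 : y ≠ 0)
    (hy : y ^ 2 + t * y = 1) : trF2 n t⁻¹ = 0 := by
  have hu : t * t⁻¹ = 1 := mul_inv_cancel₀ ht
  have hz : (y * t⁻¹) * (y * t⁻¹) + (y * t⁻¹) = t⁻¹ ^ 2 := by
    linear_combination (t⁻¹ ^ 2) * hy - y * t⁻¹ * hu
  have h0 := tr_sq' (n := n) (y * t⁻¹)
  rw [hz, tr_sq] at h0
  exact h0

lemma zmod2_ne_zero {a : ZMod 2} (h : a ≠ 0) : a = 1 := by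
  revert h; revert a; decide

lemma zmod2_ne_one {a : ZMod 2} (h : a ≠ 1) : a = 0 := by
  revert h; revert a; decide

lemma main_count (hn : n ≠ 0) (γ : GaloisField 2 n) (hγ : γ ≠ 0) :
    ∃ T₀ : ℕ, kloo n γ = 4 + 4 * (T₀ : ℤ) - 2 ^ n ∧
      (trF2 n γ = 0 → Odd T₀) ∧ (trF2 n γ = 1 → Even T₀) := by
  classical
  set a := (frobeniusEquiv (GaloisField 2 n) 2).symm γ with ha
  have ha2 : a ^ 2 = γ := frobeniusEquiv_symm_pow_p (GaloisField 2 n) 2 γ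
  have ha0 : a ≠ 0 := by
    intro h; apply hγ; rw [← ha2, h]; ring
  set e : GaloisField 2 n → ℤ := fun x => (-1 : ℤ) ^ (trF2 n x).val with he
  -- Step 1: substitution x = a⁻¹ * y
  have hga : γ * a⁻¹ = a := by
    field_simp [← ha2]; exact ha2.symm
  have step1 : kloo n γ = ∑ y : GaloisField 2 n, e (a * (y + y⁻¹)) := by
    rw [kloo]
    refine (Fintype.sum_bijective (fun y : GaloisField 2 n => a⁻¹ * y)
      ((Equiv.mulLeft₀ a⁻¹ (inv_ne_zero ha0)).bijective) _ _ (fun y => ?_)).symm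
    have : γ * (a⁻¹ * y) + (a⁻¹ * y)⁻¹ = a * (y + y⁻¹) := by
      rw [mul_inv_rev, inv_inv, ← mul_assoc, hga, mul_add, mul_comm y⁻¹ a]
    rw [he]
    simp only
    rw [this]
  -- Step 2: split off y = 0 and y = 1
  set U : Finset (GaloisField 2 n) := Finset.univ \ {0, 1} with hU
  have h01 : ({0, 1} : Finset (GaloisField 2 n)) ⊆ Finset.univ := Finset.subset_univ _
  have hsum01 : ∑ y ∈ ({0, 1} : Finset (GaloisField 2 n)), e (a * (y + y⁻¹)) = 2 := by
    rw [Finset.sum_pair (zero_ne_one (α := GaloisField 2 n))]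
    have e1 : a * ((0 : GaloisField 2 n) + 0⁻¹) = 0 := by
      rw [inv_zero, add_zero, mul_zero]
    have e2 : a * ((1 : GaloisField 2 n) + 1⁻¹) = 0 := by
      rw [inv_one]
      have : (1 : GaloisField 2 n) + 1 = 0 := by
        linear_combination (two_eq_zero (n := n))
      rw [this, mul_zero]
    rw [e1, e2, he]
    simp only [tr_zero, ZMod.val_zero, pow_zero]
    norm_num
  have step2 : kloo n γ = (∑ y ∈ U, e (a * (y + y⁻¹))) + 2 := by
    rw [step1, ← Finset.sum_sdiff h01, hsum01, ← hU]
  -- the index set S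
  set S : Finset (GaloisField 2 n) :=
    Finset.univ.filter (fun t => t ≠ 0 ∧ trF2 n t⁻¹ = 0) with hS
  have hmaps : ∀ y ∈ U, y + y⁻¹ ∈ S := by
    intro y hy
    rw [hU] at hy
    simp only [Finset.mem_sdiff, Finset.mem_univ, true_and, Finset.mem_insert,
      Finset.mem_singleton, not_or] at hy
    obtain ⟨hy0, hy1⟩ := hy
    have hinv : y * y⁻¹ = 1 := mul_inv_cancel₀ hy0
    have hroot : y ^ 2 + (y + y⁻¹) * y = 1 := by
      linear_combination hinv + y ^ 2 * (two_eq_zero (n := n))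
    have ht0 : y + y⁻¹ ≠ 0 := by
      intro h
      apply hy1
      apply sq_eq_one
      have hyy : y⁻¹ = y := by linear_combination h - y * (two_eq_zero (n := n))
      calc y * y = y * y⁻¹ := by rw [hyy]
        _ = 1 := hinv
    rw [hS]
    simp only [Finset.mem_filter, Finset.mem_univ, true_and]
    exact ⟨ht0, tr_inv_of_root ht0 hy0 hroot⟩
  -- fibers over S have exactly two elements
  have hfiber : ∀ t ∈ S, (U.filter (fun y => y + y⁻¹ = t)).card = 2 := by
    intro t ht
    rw [hS] at ht
    simp only [Finset.mem_filter, Finset.mem_univ, true_and] at ht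
    obtain ⟨ht0, htr⟩ := ht
    have htinv : t * t⁻¹ = 1 := mul_inv_cancel₀ ht0
    have hc : trF2 n (t⁻¹ ^ 2) = 0 := by rw [tr_sq]; exact htr
    obtain ⟨z, hz⟩ := artin_schreier hn hc
    set y₀ : GaloisField 2 n := t * z with hy₀def
    have hy₀ : y₀ ^ 2 + t * y₀ = 1 := by
      rw [hy₀def]
      linear_combination t ^ 2 * hz + (t * t⁻¹ + 1) * htinv
    have hy₀0 : y₀ ≠ 0 := by
      intro h; rw [h] at hy₀; simp at hy₀
    have hy₀inv : y₀ * y₀⁻¹ = 1 := mul_inv_cancel₀ hy₀0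
    have hy₀1 : y₀ ≠ 1 := by
      intro h
      apply ht0
      rw [h] at hy₀
      linear_combination hy₀
    have hroot : y₀⁻¹ = y₀ + t :=
      inv_eq_of_mul_eq_one_right (by linear_combination hy₀)
    have hpi₀ : y₀ + y₀⁻¹ = t := by
      rw [hroot]
      linear_combination y₀ * (two_eq_zero (n := n))
    have hne : y₀ ≠ y₀⁻¹ := by
      intro h
      apply hy₀1
      apply sq_eq_one
      calc y₀ * y₀ = y₀ * y₀⁻¹ := by rw [← h]
        _ = 1 := hy₀inv
    have hfil : U.filter (fun y => y + y⁻¹ = t) = {y₀, y₀⁻¹} := by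
      ext y
      simp only [Finset.mem_filter, hU, Finset.mem_sdiff, Finset.mem_univ, true_and,
        Finset.mem_insert, Finset.mem_singleton, not_or]
      constructor
      · rintro ⟨⟨hy0, hy1⟩, hyt⟩
        have hyinv : y * y⁻¹ = 1 := mul_inv_cancel₀ hy0
        have hy2 : y ^ 2 + t * y = 1 := by
          rw [← hyt]
          linear_combination hyinv + y ^ 2 * (two_eq_zero (n := n))
        have key : (y + y₀) * (y + y₀ + t) = 0 := by
          linear_combination hy2 + hy₀ + (y * y₀ + 1) * (two_eq_zero (n := n))
        rcases mul_eq_zero.1 key with h' | h'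
        · left; linear_combination h' - y₀ * (two_eq_zero (n := n))
        · right
          rw [hroot]
          linear_combination h' - (y₀ + t) * (two_eq_zero (n := n))
      · rintro (rfl | rfl)
        · exact ⟨⟨hy₀0, hy₀1⟩, hpi₀⟩
        · refine ⟨⟨inv_ne_zero hy₀0, ?_⟩, ?_⟩
          · intro h
            apply hy₀1
            rw [← inv_inv y₀, h, inv_one]
          · rw [inv_inv, add_comm]
            exact hpi₀
    rw [hfil, Finset.card_insert_of_notMem (by simpa using hne), Finset.card_singleton]
  -- Step 3: fiberwise summation
  have step3 : ∑ y ∈ U, e (a * (y + y⁻¹)) = ∑ t ∈ S, 2 * e (a * t) := by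
    rw [← Finset.sum_fiberwise_of_maps_to hmaps (fun y => e (a * (y + y⁻¹)))]
    refine Finset.sum_congr rfl (fun t ht => ?_)
    have : ∀ y ∈ U.filter (fun y => y + y⁻¹ = t), e (a * (y + y⁻¹)) = e (a * t) := by
      intro y hy
      simp only [Finset.mem_filter] at hy
      rw [hy.2]
    rw [Finset.sum_congr rfl this, Finset.sum_const, hfiber t ht, nsmul_eq_mul]
    push_cast
    ring
  -- cardinality of S
  have hScard : 2 * (S.card + 1) = 2 ^ n := by
    set K := Finset.univ.filter (fun x : GaloisField 2 n => trF2 n x = 0) with hK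
    have h0K : (0 : GaloisField 2 n) ∈ K := by
      simp only [hK, Finset.mem_filter, Finset.mem_univ, true_and]
      exact tr_zero
    have hbij : S.card = (K.erase 0).card := by
      apply Finset.card_bij (fun t _ => t⁻¹)
      · intro t htmem
        rw [hS] at htmem
        simp only [Finset.mem_filter, Finset.mem_univ, true_and] at htmem
        simp only [Finset.mem_erase, hK, Finset.mem_filter, Finset.mem_univ, true_and]
        exact ⟨inv_ne_zero htmem.1, htmem.2⟩
      · intro x _ y _ h
        exact inv_injective h
      · intro u hu
        simp only [Finset.mem_erase, hK, Finset.mem_filter, Finset.mem_univ, true_and] at hu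
        refine ⟨u⁻¹, ?_, inv_inv u⟩
        rw [hS]
        simp only [Finset.mem_filter, Finset.mem_univ, true_and]
        refine ⟨inv_ne_zero hu.1, ?_⟩
        rw [inv_inv]
        exact hu.2
    have hker := card_ker_tr (n := n) hn
    rw [← hK] at hker
    have herase := Finset.card_erase_add_one h0K
    omega
  -- splitting S according to the value of `trF2 n (a*t)`
  set A₀ := S.filter (fun t => trF2 n (a * t) = 0) with hA₀
  have hsplitcard : A₀.card + (S.filter (fun t => ¬ trF2 n (a * t) = 0)).card = S.card := by
    rw [hA₀]
    exact Finset.card_filter_add_card_filter_not (s := S)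
      (p := fun t => trF2 n (a * t) = 0)
  have hsumval : ∑ t ∈ S, ((trF2 n (a * t)).val : ℤ) = (S.card : ℤ) - (A₀.card : ℤ) := by
    rw [← Finset.sum_filter_add_sum_filter_not S (fun t => trF2 n (a * t) = 0)
      (fun t => ((trF2 n (a * t)).val : ℤ))]
    have h1 : ∑ t ∈ S.filter (fun t => trF2 n (a * t) = 0), ((trF2 n (a * t)).val : ℤ) = 0 :=
      Finset.sum_eq_zero (fun t htm => by
        simp only [Finset.mem_filter] at htm
        rw [htm.2]
        rfl)
    have h2 : ∑ t ∈ S.filter (fun t => ¬ trF2 n (a * t) = 0), ((trF2 n (a * t)).val : ℤ)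
        = ((S.filter (fun t => ¬ trF2 n (a * t) = 0)).card : ℤ) := by
      rw [Finset.sum_congr rfl (fun t htm => ?_), Finset.sum_const, nsmul_eq_mul, mul_one]
      simp only [Finset.mem_filter] at htm
      rw [zmod2_ne_zero htm.2]
      rfl
    rw [h1, h2, zero_add]
    omega
  have step4 : kloo n γ = 4 + 4 * (A₀.card : ℤ) - 2 ^ n := by
    have h4 : ∀ t ∈ S, 2 * e (a * t) = 2 - 4 * ((trF2 n (a * t)).val : ℤ) := fun t _ => by
      rw [he]
      simp only
      rw [neg_one_pow_val]
      ring
    rw [step2, step3, Finset.sum_congr rfl h4, Finset.sum_sub_distrib, Finset.sum_const,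
      nsmul_eq_mul, ← Finset.mul_sum, hsumval]
    have hcast : ((2 : ℤ)) ^ n = 2 * ((S.card : ℤ) + 1) := by exact_mod_cast hScard.symm
    rw [hcast]
    ring
  -- the special fixed point r
  set r := (frobeniusEquiv (GaloisField 2 n) 2).symm a⁻¹ with hr
  have hr2 : r ^ 2 = a⁻¹ := frobeniusEquiv_symm_pow_p (GaloisField 2 n) 2 a⁻¹
  have hr0 : r ≠ 0 := by
    intro h
    rw [h] at hr2
    apply ha0
    apply inv_eq_zero.mp
    rw [← hr2]
    ring
  have htrγa : trF2 n a = trF2 n γ := by rw [← ha2, tr_sq]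
  have hrinvsq : (r⁻¹) ^ 2 = a := by rw [inv_pow, hr2, inv_inv]
  have htrrinv : trF2 n r⁻¹ = trF2 n γ := by rw [← htrγa, ← hrinvsq, tr_sq]
  have har2 : (a * r) ^ 2 = a := by
    rw [mul_pow, hr2]
    field_simp
  have htrar : trF2 n (a * r) = trF2 n γ := by
    have h := tr_sq (n := n) (a * r)
    rw [har2] at h
    rw [← h]
    exact htrγa
  have hainv : ∀ t : GaloisField 2 n, t ≠ 0 → a * (a * t)⁻¹ = t⁻¹ := by
    intro t ht
    field_simp
  have hmem0 : ∀ t ∈ A₀, t ≠ 0 ∧ trF2 n t⁻¹ = 0 ∧ trF2 n (a * t) = 0 := by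
    intro t htm
    rw [hA₀, hS] at htm
    simp only [Finset.mem_filter, Finset.mem_univ, true_and] at htm
    exact ⟨htm.1.1, htm.1.2, htm.2⟩
  have hmem0' : ∀ t : GaloisField 2 n,
      t ≠ 0 → trF2 n t⁻¹ = 0 → trF2 n (a * t) = 0 → t ∈ A₀ := by
    intro t h1 h2 h3
    rw [hA₀, hS]
    simp only [Finset.mem_filter, Finset.mem_univ, true_and]
    exact ⟨⟨h1, h2⟩, h3⟩
  have hiconv : ∀ t ∈ A₀, (a * t)⁻¹ ∈ A₀ := by
    intro t htm
    obtain ⟨ht0, htinv, htat⟩ := hmem0 t htm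
    refine hmem0' _ (inv_ne_zero (mul_ne_zero ha0 ht0)) ?_ ?_
    · rw [inv_inv]; exact htat
    · rw [hainv t ht0]; exact htinv
  have hiinv : ∀ t : GaloisField 2 n, t ≠ 0 → (a * (a * t)⁻¹)⁻¹ = t := by
    intro t ht
    rw [hainv t ht, inv_inv]
  have hfix : ∀ t : GaloisField 2 n, t ≠ 0 → (a * t)⁻¹ = t → t = r := by
    intro t ht h
    apply injective_pow_p (R := GaloisField 2 n) (p := 2)
    rw [hr2]
    apply (inv_eq_of_mul_eq_one_right ?_).symm
    have h1 : a * t = t⁻¹ := by rw [← inv_inv (a * t), h]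
    calc a * t ^ 2 = (a * t) * t := by ring
      _ = t⁻¹ * t := by rw [h1]
      _ = 1 := inv_mul_cancel₀ ht
  have hrfix : (a * r)⁻¹ = r := by
    apply inv_eq_of_mul_eq_one_right
    calc a * r * r = a * r ^ 2 := by ring
      _ = a * a⁻¹ := by rw [hr2]
      _ = 1 := mul_inv_cancel₀ ha0
  refine ⟨A₀.card, step4, ?_, ?_⟩
  · -- trace zero: odd
    intro h0
    have hrA : r ∈ A₀ :=
      hmem0' r hr0 (htrrinv.trans h0) (htrar.trans h0)
    have hsum0 : ∑ _t ∈ A₀.erase r, (1 : ZMod 2) = 0 := by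
      apply Finset.sum_involution (g := fun t _ => (a * t)⁻¹)
      · intro t _
        decide
      · intro t htm _
        intro heq
        obtain ⟨ht0, -, -⟩ := hmem0 t (Finset.mem_of_mem_erase htm)
        exact (Finset.ne_of_mem_erase htm) (hfix t ht0 heq)
      · intro t htm
        have htA := Finset.mem_of_mem_erase htm
        obtain ⟨ht0, -, -⟩ := hmem0 t htA
        refine Finset.mem_erase.mpr ⟨?_, hiconv t htA⟩
        intro heq
        apply Finset.ne_of_mem_erase htm
        rw [← hiinv t ht0, heq, hrfix]
      · intro t htm
        obtain ⟨ht0, -, -⟩ := hmem0 t (Finset.mem_of_mem_erase htm)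
        exact hiinv t ht0
    rw [Finset.sum_const, nsmul_eq_mul, mul_one] at hsum0
    have hdvd : 2 ∣ (A₀.erase r).card := (ZMod.natCast_eq_zero_iff _ 2).mp hsum0
    have hcard := Finset.card_erase_add_one hrA
    obtain ⟨k, hk⟩ := hdvd
    exact ⟨k, by omega⟩
  · -- trace one: even
    intro h1
    have hrA : r ∉ A₀ := by
      intro hmem
      obtain ⟨-, h, -⟩ := hmem0 r hmem
      rw [htrrinv, h1] at h
      exact one_ne_zero h
    have hsum0 : ∑ _t ∈ A₀, (1 : ZMod 2) = 0 := by
      apply Finset.sum_involution (g := fun t _ => (a * t)⁻¹)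
      · intro t _
        decide
      · intro t htm _
        intro heq
        obtain ⟨ht0, -, -⟩ := hmem0 t htm
        exact hrA ((hfix t ht0 heq) ▸ htm)
      · intro t htm
        exact hiconv t htm
      · intro t htm
        obtain ⟨ht0, -, -⟩ := hmem0 t htm
        exact hiinv t ht0
    rw [Finset.sum_const, nsmul_eq_mul, mul_one] at hsum0
    have hdvd : 2 ∣ A₀.card := (ZMod.natCast_eq_zero_iff _ 2).mp hsum0
    obtain ⟨k, hk⟩ := hdvd
    exact ⟨k, by omega⟩

end Stmt17aux


/-- Lemma: for `n ≥ 3` and `γ ∈ F_{2^n}`, `K_n(γ) ≡ 0 (mod 8)` if `Tr(γ) = 0` and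
`K_n(γ) ≡ 4 (mod 8)` if `Tr(γ) = 1`. -/
theorem stmt17 (n : ℕ) (hn : 3 ≤ n) (γ : GaloisField 2 n) :
    (trF2 n γ = 0 → kloo n γ % 8 = 0) ∧ (trF2 n γ = 1 → kloo n γ % 8 = 4) := by
  have hn0 : n ≠ 0 := by omega
  have hpow : ∃ m : ℤ, (2 : ℤ) ^ n = 8 * m := by
    refine ⟨2 ^ (n - 3), ?_⟩
    have h3 : n = 3 + (n - 3) := by omega
    rw [h3, pow_add]
    norm_num
  obtain ⟨m, hm⟩ := hpow
  constructor
  · intro h0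
    by_cases hγ : γ = 0
    · rw [hγ, Stmt17aux.kloo_zero]
      rfl
    · obtain ⟨T₀, hk, hodd, -⟩ := Stmt17aux.main_count hn0 γ hγ
      obtain ⟨u, hu⟩ := hodd h0
      rw [hk, hm, hu]
      push_cast
      omega
  · intro h1
    have hγ : γ ≠ 0 := by
      intro h
      rw [h, Stmt17aux.tr_zero] at h1
      exact absurd h1 (by decide)
    obtain ⟨T₀, hk, -, heven⟩ := Stmt17aux.main_count hn0 γ hγ
    obtain ⟨u, hu⟩ := heven h1
    rw [hk, hm, hu]
    push_cast
    omega
end
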